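/- For integer p and x ∈ ℝ, the Hilbert transform of the Bessel function J_p admits the representation H(J_p)(x) = (1/π)∫₀^π sin(x sin t - pt)dt; in particular H(J_p)(0) = (1/π)∫₀^π sin(-pt)dt = -(1-cos(πp))/(πp) for p ≠ 0, which vanishes for even p. -/

import Mathlib

open Real Filter

noncomputable section

/-- The Bessel function of the first kind of integer order `p`,
`J_p(x) = (1/π) ∫₀^π cos(pt - x sin t) dt`. -/
def besselJ (p : ℤ) (x : ℝ) : ℝ :=
  (1 / π) * ∫ t in (0 : ℝ)..π, Real.cos (p * t - x * Real.sin t)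

open MeasureTheory Set intervalIntegral Topology


section

/-- sinc-ish function -/
def Si (y : ℝ) : ℝ := ∫ v in (0:ℝ)..y, Real.sin v / v

lemma sinc_meas : Measurable fun v : ℝ => Real.sin v / v :=
  Real.measurable_sin.div measurable_id

lemma sinc_abs_le_one (v : ℝ) : |Real.sin v / v| ≤ 1 := by
  rcases eq_or_ne v 0 with h | h
  · simp [h]
  · rw [abs_div, div_le_one (abs_pos.2 h)]
    exact Real.abs_sin_le_abs

lemma sinc_intervalIntegrable (a b : ℝ) :
    IntervalIntegrable (fun v => Real.sin v / v) volume a b := by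
  rw [intervalIntegrable_iff]
  apply Measure.integrableOn_of_bounded (M := 1) measure_Ioc_lt_top.ne
    sinc_meas.aestronglyMeasurable
  filter_upwards with v using by rw [Real.norm_eq_abs]; exact sinc_abs_le_one v

lemma Si_continuous : Continuous Si :=
  intervalIntegral.continuous_primitive sinc_intervalIntegrable 0

lemma abs_Si_le (y : ℝ) : |Si y| ≤ |y| := by
  have := intervalIntegral.norm_integral_le_of_norm_le_const
    (C := 1) (f := fun v => Real.sin v / v) (a := 0) (b := y)
    (fun v _ => by rw [Real.norm_eq_abs]; exact sinc_abs_le_one v)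
  simpa [Si, Real.norm_eq_abs] using this

/-- closed form for `∫ sin t · e^{-tu}` -/
lemma integral_sin_exp (R u : ℝ) :
    ∫ t in (0:ℝ)..R, Real.sin t * Real.exp (-(t*u)) =
      (1 - Real.exp (-(R*u)) * (u * Real.sin R + Real.cos R)) / (1 + u^2) := by
  have h1 : (0:ℝ) < 1 + u ^ 2 := by positivity
  have key : ∀ t : ℝ, HasDerivAt (fun t => -Real.exp (-(t*u)) * (u * Real.sin t + Real.cos t) / (1 + u^2))
      (Real.sin t * Real.exp (-(t*u))) t := by
    intro t
    have he : HasDerivAt (fun t : ℝ => Real.exp (-(t*u))) (-u * Real.exp (-(t*u))) t := by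
      have : HasDerivAt (fun t : ℝ => -(t*u)) (-u) t := by
        exact ((hasDerivAt_id' t).mul_const u).neg.congr_deriv (by ring)
      simpa [mul_comm, Function.comp_def] using (Real.hasDerivAt_exp (-(t*u))).comp t this
    have hs : HasDerivAt (fun t : ℝ => u * Real.sin t + Real.cos t)
        (u * Real.cos t - Real.sin t) t :=
      ((Real.hasDerivAt_sin t).const_mul u).add (Real.hasDerivAt_cos t)
    have := (he.neg.mul hs).div_const (1 + u^2)
    refine this.congr_deriv (Eq.symm ?_)
    simp only [Pi.neg_apply]
    field_simp
    ring
  rw [intervalIntegral.integral_eq_sub_of_hasDerivAt (fun t _ => key t)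
    (((Real.continuous_sin.mul (by continuity)).intervalIntegrable _ _))]
  simp only [zero_mul, neg_zero, Real.exp_zero, Real.sin_zero, Real.cos_zero, mul_zero, mul_one]
  field_simp
  ring

end
noncomputable section
open Function

lemma integral_exp_neg_mul_Ioi' {t : ℝ} (ht : 0 < t) :
    ∫ u in Ioi (0:ℝ), Real.exp (-(t*u)) = 1/t := by
  have := MeasureTheory.integral_comp_mul_left_Ioi (fun v => Real.exp (-v)) 0 ht
  simp only [mul_zero, integral_exp_neg_Ioi_zero, smul_eq_mul, mul_one] at this
  rw [this, one_div]

lemma exp_neg_mul_integrableOn {t : ℝ} (ht : 0 < t) :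
    IntegrableOn (fun u : ℝ => Real.exp (-(t*u))) (Ioi 0) := by
  simpa [neg_mul] using exp_neg_integrableOn_Ioi 0 ht

lemma err_integrableOn {R : ℝ} (hR : 0 < R) :
    IntegrableOn (fun u : ℝ => Real.exp (-(R*u)) * (u * Real.sin R + Real.cos R) / (1 + u^2))
      (Ioi 0) := by
  apply Integrable.mono' ((exp_neg_mul_integrableOn hR).const_mul 2)
  · apply Continuous.aestronglyMeasurable
    apply Continuous.div
    · exact (Real.continuous_exp.comp (continuous_const.mul continuous_id).neg).mul
        (by continuity)
    · continuity
    · intro u; positivity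
  · filter_upwards [ae_restrict_mem measurableSet_Ioi] with u hu
    have hu0 : (0:ℝ) < u := hu
    have h1 : (0:ℝ) < 1 + u^2 := by positivity
    rw [Real.norm_eq_abs, abs_div, abs_of_pos h1, div_le_iff₀ h1, abs_mul,
      Real.abs_exp]
    have h2 : |u * Real.sin R + Real.cos R| ≤ u + 1 := by
      calc |u * Real.sin R + Real.cos R| ≤ |u * Real.sin R| + |Real.cos R| := abs_add_le _ _
        _ ≤ u * 1 + 1 := by
            rw [abs_mul, abs_of_pos hu0]
            exact add_le_add (mul_le_mul_of_nonneg_left (Real.abs_sin_le_one R) hu0.le)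
              (Real.abs_cos_le_one R)
        _ = u + 1 := by ring
    have h3 : u + 1 ≤ 2 * (1 + u^2) := by nlinarith
    calc Real.exp (-(R*u)) * |u * Real.sin R + Real.cos R|
        ≤ Real.exp (-(R*u)) * (2 * (1 + u^2)) :=
          mul_le_mul_of_nonneg_left (h2.trans h3) (Real.exp_pos _).le
      _ = 2 * Real.exp (-(R*u)) * (1 + u^2) := by ring

set_option maxHeartbeats 1000000 in
lemma Si_eq {R : ℝ} (hR : 0 < R) :
    Si R = π/2 - ∫ u in Ioi (0:ℝ),
      Real.exp (-(R*u)) * (u * Real.sin R + Real.cos R) / (1 + u^2) := by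
  have hFcont : Continuous (fun p : ℝ × ℝ => Real.sin p.1 * Real.exp (-(p.1*p.2))) := by
    apply Continuous.mul
    · exact Real.continuous_sin.comp continuous_fst
    · exact Real.continuous_exp.comp (continuous_fst.mul continuous_snd).neg
  have hFmeas : AEStronglyMeasurable (fun p : ℝ × ℝ => Real.sin p.1 * Real.exp (-(p.1*p.2)))
      ((volume.restrict (Ioc 0 R)).prod (volume.restrict (Ioi 0))) :=
    hFcont.aestronglyMeasurable
  have hint : Integrable (fun p : ℝ × ℝ => Real.sin p.1 * Real.exp (-(p.1*p.2)))
      ((volume.restrict (Ioc 0 R)).prod (volume.restrict (Ioi 0))) := by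
    rw [integrable_prod_iff hFmeas]
    constructor
    · filter_upwards [ae_restrict_mem measurableSet_Ioc] with t ht
      exact ((exp_neg_mul_integrableOn ht.1).const_mul _)
    · apply Integrable.mono' (integrable_const (1:ℝ))
      · exact hFmeas.norm.integral_prod_right'
      · filter_upwards [ae_restrict_mem measurableSet_Ioc] with t ht
        have h0 : (0:ℝ) < t := ht.1
        have : (fun u => ‖Real.sin t * Real.exp (-(t*u))‖) =
            fun u => |Real.sin t| * Real.exp (-(t*u)) := by
          funext u
          rw [Real.norm_eq_abs, abs_mul, Real.abs_exp]
        rw [Real.norm_eq_abs, this, MeasureTheory.integral_const_mul,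
          integral_exp_neg_mul_Ioi' h0]
        rw [abs_of_nonneg (by positivity : 0 ≤ |Real.sin t| * (1/t))]
        rw [mul_one_div, div_le_one h0]
        exact (Real.abs_sin_le_abs).trans (le_of_eq (abs_of_pos h0))
  have swap := MeasureTheory.integral_integral_swap (f := fun t u : ℝ => Real.sin t * Real.exp (-(t*u)))
    (μ := volume.restrict (Ioc 0 R)) (ν := volume.restrict (Ioi 0)) hint
  have step1 : Si R = ∫ t in Ioc (0:ℝ) R, Real.sin t / t := by
    rw [Si, intervalIntegral.integral_of_le hR.le]
  have step2 : ∫ t in Ioc (0:ℝ) R, Real.sin t / t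
      = ∫ t in Ioc (0:ℝ) R, ∫ u in Ioi (0:ℝ), Real.sin t * Real.exp (-(t*u)) := by
    apply MeasureTheory.integral_congr_ae
    filter_upwards [ae_restrict_mem measurableSet_Ioc] with t ht
    rw [MeasureTheory.integral_const_mul, integral_exp_neg_mul_Ioi' ht.1, mul_one_div]
  have step3 : ∫ u in Ioi (0:ℝ), ∫ t in Ioc (0:ℝ) R, Real.sin t * Real.exp (-(t*u))
      = ∫ u in Ioi (0:ℝ),
        (1 - Real.exp (-(R*u)) * (u * Real.sin R + Real.cos R)) / (1 + u^2) := by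
    apply MeasureTheory.integral_congr_ae
    filter_upwards with u
    rw [← intervalIntegral.integral_of_le hR.le, integral_sin_exp]
  have h1int : IntegrableOn (fun u : ℝ => (1 + u^2)⁻¹) (Ioi (0:ℝ)) :=
    (integrable_inv_one_add_sq).integrableOn
  have step4 : ∫ u in Ioi (0:ℝ),
        (1 - Real.exp (-(R*u)) * (u * Real.sin R + Real.cos R)) / (1 + u^2)
      = π/2 - ∫ u in Ioi (0:ℝ),
        Real.exp (-(R*u)) * (u * Real.sin R + Real.cos R) / (1 + u^2) := by
    have : (fun u : ℝ => (1 - Real.exp (-(R*u)) * (u * Real.sin R + Real.cos R)) / (1 + u^2))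
        = fun u : ℝ => (1 + u^2)⁻¹
          - Real.exp (-(R*u)) * (u * Real.sin R + Real.cos R) / (1 + u^2) := by
      funext u
      have h1 : (1:ℝ) + u^2 ≠ 0 := by positivity
      field_simp
    rw [this, MeasureTheory.integral_sub h1int (err_integrableOn hR)]
    congr 1
    simpa using integral_Ioi_inv_one_add_sq (i := 0)
  rw [step1, step2, swap, step3, step4]

lemma Si_err {R : ℝ} (hR : 0 < R) : |Si R - π/2| ≤ 2/R := by
  rw [Si_eq hR]
  have : |π/2 - (∫ u in Ioi (0:ℝ),
      Real.exp (-(R*u)) * (u * Real.sin R + Real.cos R) / (1 + u^2)) - π/2|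
      = ‖∫ u in Ioi (0:ℝ),
      Real.exp (-(R*u)) * (u * Real.sin R + Real.cos R) / (1 + u^2)‖ := by
    rw [Real.norm_eq_abs, ← abs_neg]; congr 1; ring
  rw [this]
  have hb := MeasureTheory.norm_integral_le_of_norm_le
    (f := fun u : ℝ => Real.exp (-(R*u)) * (u * Real.sin R + Real.cos R) / (1 + u^2))
    (g := fun u : ℝ => 2 * Real.exp (-(R*u)))
    ((exp_neg_mul_integrableOn hR).const_mul 2) ?_
  · refine hb.trans ?_
    rw [MeasureTheory.integral_const_mul, integral_exp_neg_mul_Ioi' hR]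
    rw [mul_one_div]
  · filter_upwards [ae_restrict_mem measurableSet_Ioi] with u hu
    have hu0 : (0:ℝ) < u := hu
    have h1 : (0:ℝ) < 1 + u^2 := by positivity
    rw [Real.norm_eq_abs, abs_div, abs_of_pos h1, div_le_iff₀ h1, abs_mul, Real.abs_exp]
    have h2 : |u * Real.sin R + Real.cos R| ≤ u + 1 := by
      calc |u * Real.sin R + Real.cos R| ≤ |u * Real.sin R| + |Real.cos R| := abs_add_le _ _
        _ ≤ u * 1 + 1 := by
            rw [abs_mul, abs_of_pos hu0]
            exact add_le_add (mul_le_mul_of_nonneg_left (Real.abs_sin_le_one R) hu0.le)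
              (Real.abs_cos_le_one R)
        _ = u + 1 := by ring
    have h3 : u + 1 ≤ 2 * (1 + u^2) := by nlinarith
    calc Real.exp (-(R*u)) * |u * Real.sin R + Real.cos R|
        ≤ Real.exp (-(R*u)) * (2 * (1 + u^2)) :=
          mul_le_mul_of_nonneg_left (h2.trans h3) (Real.exp_pos _).le
      _ = 2 * Real.exp (-(R*u)) * (1 + u^2) := by ring

lemma Si_tendsto : Tendsto Si atTop (𝓝 (π/2)) := by
  have h0 : Tendsto (fun R : ℝ => Si R - π/2) atTop (𝓝 0) := by
    apply squeeze_zero_norm' (a := fun R : ℝ => 2/R)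
    · filter_upwards [eventually_gt_atTop (0:ℝ)] with R hR
      simpa [Real.norm_eq_abs] using Si_err hR
    · simpa using tendsto_const_nhds.div_atTop (tendsto_id (α := ℝ))
  simpa using h0.add_const (π/2)

lemma Si_bound {y : ℝ} (hy : 0 ≤ y) : |Si y| ≤ 4 := by
  rcases le_or_gt y 1 with h | h
  · have h1 := abs_Si_le y
    rw [abs_of_nonneg hy] at h1
    linarith
  · have h1 := Si_err (show (0:ℝ) < y by linarith)
    have h2 : 2/y ≤ 2 := by
      rw [div_le_iff₀ (by linarith)]; nlinarith
    have h3 : π ≤ 4 := Real.pi_le_four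
    have h4 : |Si y| - |π/2| ≤ |Si y - π/2| := abs_sub_abs_le_abs_sub _ _
    have h5 : |π/2| = π/2 := abs_of_nonneg (by positivity)
    linarith

end
noncomputable section

def J1 (p : ℤ) (y : ℝ) : ℝ :=
  (1/π) * ∫ s in (0:ℝ)..π, Real.sin s * Real.sin (p*s - y*Real.sin s)

def J2 (p : ℤ) (y : ℝ) : ℝ :=
  (1/π) * ∫ s in (0:ℝ)..π, -(Real.sin s ^ 2 * Real.cos (p*s - y*Real.sin s))

lemma hasDerivAt_besselJ (p : ℤ) (y : ℝ) : HasDerivAt (besselJ p) (J1 p y) y := by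
  have key := intervalIntegral.hasDerivAt_integral_of_dominated_loc_of_deriv_le
    (F := fun x t => Real.cos (p * t - x * Real.sin t))
    (F' := fun x t => Real.sin t * Real.sin (p*t - x*Real.sin t))
    (a := 0) (b := π) (μ := volume) (x₀ := y) (bound := fun _ => 1) Filter.univ_mem
    (Eventually.of_forall fun x => (Continuous.aestronglyMeasurable (by continuity)))
    ((Continuous.intervalIntegrable (by continuity) _ _))
    (Continuous.aestronglyMeasurable (by continuity)).restrict
    (Eventually.of_forall fun t _ x _ => by
      rw [Real.norm_eq_abs, abs_mul]
      exact mul_le_one₀ (Real.abs_sin_le_one t) (abs_nonneg _) (Real.abs_sin_le_one _))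
    (intervalIntegrable_const)
    (Eventually.of_forall fun t _ x _ => by
      have h1 : HasDerivAt (fun x : ℝ => (p:ℝ) * t - x * Real.sin t) (-Real.sin t) x := by
        simpa using (((hasDerivAt_id x).mul_const (Real.sin t)).const_sub ((p:ℝ)*t))
      have := (Real.hasDerivAt_cos ((p:ℝ)*t - x*Real.sin t)).comp x h1
      simpa [mul_comm, Function.comp_def] using this)
  exact key.2.const_mul (1/π)

lemma hasDerivAt_J1 (p : ℤ) (y : ℝ) : HasDerivAt (J1 p) (J2 p y) y := by
  have key := intervalIntegral.hasDerivAt_integral_of_dominated_loc_of_deriv_le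
    (F := fun x t => Real.sin t * Real.sin (p * t - x * Real.sin t))
    (F' := fun x t => -(Real.sin t ^ 2 * Real.cos (p*t - x*Real.sin t)))
    (a := 0) (b := π) (μ := volume) (x₀ := y) (bound := fun _ => 1) Filter.univ_mem
    (Eventually.of_forall fun x => (Continuous.aestronglyMeasurable (by continuity)))
    ((Continuous.intervalIntegrable (by continuity) _ _))
    (Continuous.aestronglyMeasurable (by continuity)).restrict
    (Eventually.of_forall fun t _ x _ => by
      rw [Real.norm_eq_abs, abs_neg, abs_mul]
      calc |Real.sin t ^ 2| * |Real.cos (p*t - x*Real.sin t)| ≤ 1 * 1 := by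
            apply mul_le_mul _ (Real.abs_cos_le_one _) (abs_nonneg _) zero_le_one
            rw [abs_pow]
            exact pow_le_one₀ (abs_nonneg _) (Real.abs_sin_le_one t)
        _ = 1 := by norm_num)
    (intervalIntegrable_const)
    (Eventually.of_forall fun t _ x _ => by
      have h1 : HasDerivAt (fun x : ℝ => (p:ℝ) * t - x * Real.sin t) (-Real.sin t) x := by
        simpa using (((hasDerivAt_id x).mul_const (Real.sin t)).const_sub ((p:ℝ)*t))
      have h2 := ((Real.hasDerivAt_sin ((p:ℝ)*t - x*Real.sin t)).comp x h1).const_mul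
        (Real.sin t)
      refine h2.congr_deriv (Eq.symm ?_)
      ring)
  exact key.2.const_mul (1/π)

lemma bessel_ode (p : ℤ) (y : ℝ) :
    y^2 * J2 p y + y * J1 p y + (y^2 - (p:ℝ)^2) * besselJ p y = 0 := by
  have hD : ∀ s : ℝ, HasDerivAt (fun s => -(((p:ℝ) + y * Real.cos s) *
      Real.sin ((p:ℝ)*s - y*Real.sin s)))
      (y^2 * (-(Real.sin s ^ 2 * Real.cos ((p:ℝ)*s - y*Real.sin s)))
        + y * (Real.sin s * Real.sin ((p:ℝ)*s - y*Real.sin s))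
        + (y^2 - (p:ℝ)^2) * Real.cos ((p:ℝ)*s - y*Real.sin s)) s := by
    intro s
    have hA : HasDerivAt (fun s : ℝ => (p:ℝ) + y * Real.cos s) (y * -Real.sin s) s :=
      ((Real.hasDerivAt_cos s).const_mul y).const_add _
    have hθ : HasDerivAt (fun s : ℝ => (p:ℝ)*s - y*Real.sin s) ((p:ℝ) - y * Real.cos s) s := by
      exact (((hasDerivAt_id' s).const_mul (p:ℝ)).sub ((Real.hasDerivAt_sin s).const_mul y)).congr_deriv (by ring)
    have hB := (Real.hasDerivAt_sin ((p:ℝ)*s - y*Real.sin s)).comp s hθ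
    have := (hA.mul hB).neg
    refine this.congr_deriv (Eq.symm ?_)
    have hcs := Real.sin_sq_add_cos_sq s
    simp only [Function.comp]
    linear_combination (-(y^2) * Real.cos ((p:ℝ)*s - y*Real.sin s)) * hcs
  have hcont : Continuous (fun s => y^2 * (-(Real.sin s ^ 2 * Real.cos ((p:ℝ)*s - y*Real.sin s)))
        + y * (Real.sin s * Real.sin ((p:ℝ)*s - y*Real.sin s))
        + (y^2 - (p:ℝ)^2) * Real.cos ((p:ℝ)*s - y*Real.sin s)) := by fun_prop
  have key := intervalIntegral.integral_eq_sub_of_hasDerivAt (fun s _ => hD s)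
    (hcont.intervalIntegrable 0 π)
  have hend : (-(((p:ℝ) + y * Real.cos π) * Real.sin ((p:ℝ)*π - y*Real.sin π)))
      - (-(((p:ℝ) + y * Real.cos 0) * Real.sin ((p:ℝ)*0 - y*Real.sin 0))) = 0 := by
    simp [Real.sin_int_mul_pi p]
  rw [hend] at key
  have e1 : y^2 * J2 p y
      = (1/π) * ∫ s in (0:ℝ)..π, y^2 * (-(Real.sin s ^ 2 * Real.cos ((p:ℝ)*s - y*Real.sin s))) := by
    rw [J2, intervalIntegral.integral_const_mul]; ring
  have e2 : y * J1 p y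
      = (1/π) * ∫ s in (0:ℝ)..π, y * (Real.sin s * Real.sin ((p:ℝ)*s - y*Real.sin s)) := by
    rw [J1, intervalIntegral.integral_const_mul]; ring
  have e3 : (y^2 - (p:ℝ)^2) * besselJ p y
      = (1/π) * ∫ s in (0:ℝ)..π, (y^2 - (p:ℝ)^2) * Real.cos ((p:ℝ)*s - y*Real.sin s) := by
    rw [besselJ, intervalIntegral.integral_const_mul]; ring
  have i1 : IntervalIntegrable
      (fun s => y^2 * (-(Real.sin s ^ 2 * Real.cos ((p:ℝ)*s - y*Real.sin s)))) volume 0 π :=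
    Continuous.intervalIntegrable (by fun_prop) _ _
  have i2 : IntervalIntegrable
      (fun s => y * (Real.sin s * Real.sin ((p:ℝ)*s - y*Real.sin s))) volume 0 π :=
    Continuous.intervalIntegrable (by fun_prop) _ _
  have i3 : IntervalIntegrable
      (fun s => (y^2 - (p:ℝ)^2) * Real.cos ((p:ℝ)*s - y*Real.sin s)) volume 0 π :=
    Continuous.intervalIntegrable (by fun_prop) _ _
  rw [e1, e2, e3, ← mul_add, ← mul_add, ← intervalIntegral.integral_add i1 i2,
    ← intervalIntegral.integral_add (i1.add i2) i3, key, mul_zero]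

end
noncomputable section

set_option maxHeartbeats 1000000 in
lemma besselJ_decay (p : ℤ) : ∃ K : ℝ, 0 ≤ K ∧
    ∀ t : ℝ, 1 ≤ t → |besselJ p t| ≤ K / Real.sqrt t := by
  classical
  set J := besselJ p with hJdef
  set u : ℝ → ℝ := fun t => Real.sqrt t * J t with hu
  set u1 : ℝ → ℝ := fun t => (2*Real.sqrt t)⁻¹ * J t + Real.sqrt t * J1 p t with hu1
  set c0 : ℝ := (p:ℝ)^2 - 1/4 with hc0
  set c : ℝ := (p:ℝ)^2 + 1 with hc
  have hcpos : 0 < c := by positivity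
  have hc0c : |c0| ≤ c := by
    rw [hc0, hc, abs_le]; constructor <;> nlinarith [sq_nonneg ((p:ℝ))]
  set E : ℝ → ℝ := fun t => (u1 t)^2 + (u t)^2 with hE
  set W : ℝ → ℝ := fun t => E t * Real.exp (c/t) with hW
  have hut : ∀ t : ℝ, 0 < t → HasDerivAt u (u1 t) t := by
    intro t ht
    have h1 := (Real.hasDerivAt_sqrt ht.ne').mul (hasDerivAt_besselJ p t)
    have : 1/(2*Real.sqrt t) * J t + Real.sqrt t * J1 p t = u1 t := by
      rw [hu1, one_div]
    rw [← this]
    exact h1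
  have hu1t : ∀ t : ℝ, 0 < t → HasDerivAt u1 (c0/t^2 * u t - u t) t := by
    intro t ht
    have hst : Real.sqrt t ≠ 0 := (Real.sqrt_pos.2 ht).ne'
    have hsq : Real.sqrt t ^ 2 = t := Real.sq_sqrt ht.le
    have h2s : HasDerivAt (fun t : ℝ => 2 * Real.sqrt t) (2 * (1/(2*Real.sqrt t))) t :=
      (Real.hasDerivAt_sqrt ht.ne').const_mul 2
    have hinv : HasDerivAt (fun t : ℝ => (2*Real.sqrt t)⁻¹)
        (-(2 * (1/(2*Real.sqrt t))) / (2*Real.sqrt t)^2) t := h2s.inv (by positivity)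
    have hraw := (hinv.mul (hasDerivAt_besselJ p t)).add
      ((Real.hasDerivAt_sqrt ht.ne').mul (hasDerivAt_J1 p t))
    have hraweq : c0/t^2 * u t - u t
        = (-(2 * (1/(2*Real.sqrt t))) / (2*Real.sqrt t)^2 * J t
            + (2*Real.sqrt t)⁻¹ * J1 p t)
          + (1/(2*Real.sqrt t) * J1 p t + Real.sqrt t * J2 p t) := by
      have hode := bessel_ode p t
      have ht2 : t^2 ≠ 0 := by positivity
      have hode' : t^2 * J2 p t + t * J1 p t + (t^2 - (p:ℝ)^2) * J t = 0 := hode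
      have hJ2 : J2 p t = (-(t * J1 p t) - (t^2 - (p:ℝ)^2) * J t)/t^2 := by
        rw [eq_div_iff ht2]
        linarith [hode']
      rw [hJ2, hu]
      set sq := Real.sqrt t with hs
      rw [← hsq]
      have hsq0 : sq ≠ 0 := hst
      simp only [Real.sqrt_sq (show (0:ℝ) ≤ sq from Real.sqrt_nonneg t), hc0]
      field_simp
      ring
    rw [hraweq]
    exact hraw
  have hEt : ∀ t : ℝ, 0 < t → HasDerivAt E
      (2*u1 t^1*(c0/t^2 * u t - u t) + 2*u t^1*u1 t) t := by
    intro t ht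
    have := ((hu1t t ht).pow 2).add ((hut t ht).pow 2)
    simpa [hE, Pi.add_def] using this
  have hWt : ∀ t : ℝ, 0 < t → HasDerivAt W
      ((2*u1 t^1*(c0/t^2 * u t - u t) + 2*u t^1*u1 t) * Real.exp (c/t)
        + E t * (Real.exp (c/t) * (c * -(t^2)⁻¹))) t := by
    intro t ht
    have hct : HasDerivAt (fun t : ℝ => c/t) (c * -(t^2)⁻¹) t := by
      simpa [div_eq_mul_inv] using (hasDerivAt_inv ht.ne').const_mul c
    have hexp := (Real.hasDerivAt_exp (c/t)).comp t hct
    exact (hEt t ht).mul hexp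
  have hWderiv_nonpos : ∀ t : ℝ, 0 < t → deriv W t ≤ 0 := by
    intro t ht
    rw [(hWt t ht).deriv]
    have h1 : 2*c0*(u t)*(u1 t) ≤ c*((u1 t)^2+(u t)^2) := by
      nlinarith [sq_nonneg (u t - u1 t), sq_nonneg (u t + u1 t), le_abs_self c0,
        neg_abs_le c0, sq_nonneg (u t - u1 t), hc0c]
    have hexp : (0:ℝ) < Real.exp (c/t) := Real.exp_pos _
    have ht2 : (0:ℝ) < t^2 := by positivity
    have key : (2*u1 t^1*(c0/t^2 * u t - u t) + 2*u t^1*u1 t) * Real.exp (c/t)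
        + E t * (Real.exp (c/t) * (c * -(t^2)⁻¹))
        = Real.exp (c/t) * ((2*c0*(u t)*(u1 t) - c*E t)/t^2) := by
      rw [hE]; field_simp; ring
    rw [key]
    apply mul_nonpos_of_nonneg_of_nonpos hexp.le
    apply div_nonpos_of_nonpos_of_nonneg _ ht2.le
    have hEeq : E t = u1 t ^ 2 + u t ^ 2 := rfl
    rw [hEeq]
    linarith
  have hanti : AntitoneOn W (Ici 1) := by
    apply antitoneOn_of_deriv_nonpos (convex_Ici 1)
    · intro t ht
      exact ((hWt t (by linarith [mem_Ici.mp ht])).continuousAt).continuousWithinAt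
    · intro t ht
      rw [interior_Ici] at ht
      exact ((hWt t (by linarith [mem_Ioi.mp ht])).differentiableAt).differentiableWithinAt
    · intro t ht
      rw [interior_Ici] at ht
      exact hWderiv_nonpos t (by linarith [mem_Ioi.mp ht])
  refine ⟨Real.sqrt (E 1 * Real.exp c), Real.sqrt_nonneg _, fun t ht => ?_⟩
  have ht0 : (0:ℝ) < t := by linarith
  have hEeq : E t = u1 t ^ 2 + u t ^ 2 := rfl
  have hE_nonneg : 0 ≤ E t := by rw [hEeq]; positivity
  have hWeq : W t = E t * Real.exp (c/t) := rfl
  have h1 : E t ≤ W t := by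
    rw [hWeq]
    nlinarith [Real.one_le_exp (by positivity : (0:ℝ) ≤ c/t), hE_nonneg]
  have h2 : W t ≤ W 1 := hanti (mem_Ici.mpr le_rfl) (mem_Ici.mpr ht) ht
  have h3 : W 1 = E 1 * Real.exp c := by show E 1 * Real.exp (c/1) = _; norm_num
  have h4 : (u t)^2 ≤ E 1 * Real.exp c := by
    have : (u t)^2 ≤ E t := by rw [hEeq]; nlinarith [sq_nonneg (u1 t)]
    linarith
  have h5 : |u t| ≤ Real.sqrt (E 1 * Real.exp c) := by
    rw [← Real.sqrt_sq_eq_abs]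
    exact Real.sqrt_le_sqrt h4
  have hst : (0:ℝ) < Real.sqrt t := Real.sqrt_pos.2 ht0
  rw [le_div_iff₀ hst]
  calc |J t| * Real.sqrt t = |u t| := by
        rw [hu, abs_mul, abs_of_nonneg (Real.sqrt_nonneg t)]; ring
    _ ≤ _ := h5

end
noncomputable section

lemma besselJ_continuous (p : ℤ) : Continuous (besselJ p) :=
  continuous_iff_continuousAt.2 fun y => (hasDerivAt_besselJ p y).continuousAt

lemma besselJ_neg (p : ℤ) (y : ℝ) :
    besselJ p (-y) = Real.cos ((p:ℝ)*π) * besselJ p y := by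
  unfold besselJ
  have h0 : ∀ t : ℝ, Real.cos ((p:ℝ) * t - (-y) * Real.sin t)
      = Real.cos ((p:ℝ) * t + y * Real.sin t) := by
    intro t; congr 1; ring
  have e1 : (∫ t in (0:ℝ)..π, Real.cos ((p:ℝ) * t - (-y) * Real.sin t))
      = ∫ t in (0:ℝ)..π, Real.cos ((p:ℝ) * t + y * Real.sin t) :=
    intervalIntegral.integral_congr fun t _ => h0 t
  have e2 : (∫ t in (0:ℝ)..π, Real.cos ((p:ℝ) * t + y * Real.sin t))
      = ∫ t in (0:ℝ)..π, Real.cos ((p:ℝ) * (π - t) + y * Real.sin (π - t)) := by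
    have := intervalIntegral.integral_comp_sub_left
      (fun s => Real.cos ((p:ℝ) * s + y * Real.sin s)) π (a := 0) (b := π)
    simp only [sub_self, sub_zero] at this
    rw [this]
  have e3 : (∫ t in (0:ℝ)..π, Real.cos ((p:ℝ) * (π - t) + y * Real.sin (π - t)))
      = ∫ t in (0:ℝ)..π, Real.cos ((p:ℝ)*π) * Real.cos ((p:ℝ) * t - y * Real.sin t) := by
    apply intervalIntegral.integral_congr
    intro t _
    show Real.cos ((p:ℝ) * (π - t) + y * Real.sin (π - t))
        = Real.cos ((p:ℝ)*π) * Real.cos ((p:ℝ) * t - y * Real.sin t)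
    rw [Real.sin_pi_sub]
    have harg : (p:ℝ) * (π - t) + y * Real.sin t
        = (p:ℝ)*π - ((p:ℝ)*t - y*Real.sin t) := by ring
    rw [harg, Real.cos_sub, Real.sin_int_mul_pi]
    ring
  rw [e1, e2, e3, intervalIntegral.integral_const_mul]
  ring

lemma besselJ_abs_le_one (p : ℤ) (y : ℝ) : |besselJ p y| ≤ 1 := by
  unfold besselJ
  rw [abs_mul]
  have h1 : |∫ t in (0:ℝ)..π, Real.cos ((p:ℝ) * t - y * Real.sin t)| ≤ 1 * |π - 0| := by
    have := intervalIntegral.norm_integral_le_of_norm_le_const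
      (C := 1) (f := fun t : ℝ => Real.cos ((p:ℝ) * t - y * Real.sin t)) (a := 0) (b := π)
      (fun t _ => by rw [Real.norm_eq_abs]; exact Real.abs_cos_le_one _)
    simpa [Real.norm_eq_abs] using this
  have hπ : |1/π| = 1/π := abs_of_pos (by positivity)
  rw [hπ]
  calc (1/π) * |∫ t in (0:ℝ)..π, Real.cos ((p:ℝ) * t - y * Real.sin t)|
      ≤ (1/π) * (1 * |π - 0|) := by
        apply mul_le_mul_of_nonneg_left h1 (by positivity)
    _ = 1 := by
        rw [abs_of_pos (by linarith [Real.pi_pos] : (0:ℝ) < π - 0)]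
        field_simp
        ring

lemma bessel_diff (p : ℤ) (x t : ℝ) :
    besselJ p (x+t) - besselJ p (x-t)
      = (2/π) * ∫ s in (0:ℝ)..π,
          Real.sin ((p:ℝ)*s - x*Real.sin s) * Real.sin (t*Real.sin s) := by
  unfold besselJ
  rw [← mul_sub, ← intervalIntegral.integral_sub
    (Continuous.intervalIntegrable (by fun_prop) _ _)
    (Continuous.intervalIntegrable (by fun_prop) _ _)]
  have hcongr : ∀ s : ℝ, Real.cos ((p:ℝ)*s - (x+t)*Real.sin s)
      - Real.cos ((p:ℝ)*s - (x-t)*Real.sin s)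
      = 2 * (Real.sin ((p:ℝ)*s - x*Real.sin s) * Real.sin (t*Real.sin s)) := by
    intro s
    rw [Real.cos_sub_cos]
    have e1 : ((p:ℝ)*s - (x+t)*Real.sin s + ((p:ℝ)*s - (x-t)*Real.sin s))/2
        = (p:ℝ)*s - x*Real.sin s := by ring
    have e2 : ((p:ℝ)*s - (x+t)*Real.sin s - ((p:ℝ)*s - (x-t)*Real.sin s))/2
        = -(t*Real.sin s) := by ring
    rw [e1, e2, Real.sin_neg]
    ring
  rw [intervalIntegral.integral_congr (fun s _ => hcongr s),
    intervalIntegral.integral_const_mul]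
  have hπ : (π:ℝ) ≠ 0 := by positivity
  field_simp
  simp only [mul_comm (Real.sin _) t]

set_option maxHeartbeats 1000000 in
lemma f_integrableOn (p : ℤ) (x : ℝ) {ε : ℝ} (hε : 0 < ε) :
    IntegrableOn (fun t => (besselJ p (x+t) - besselJ p (x-t))/t) (Ioi ε) volume := by
  obtain ⟨K, hK0, hK⟩ := besselJ_decay p
  set f : ℝ → ℝ := fun t => (besselJ p (x+t) - besselJ p (x-t))/t with hf
  have hfc : ContinuousOn f (Ioi 0) := by
    apply ContinuousOn.div
    · exact (((besselJ_continuous p).comp (continuous_const.add continuous_id)).sub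
        ((besselJ_continuous p).comp (continuous_const.sub continuous_id))).continuousOn
    · exact continuousOn_id
    · intro t ht; exact (mem_Ioi.mp ht).ne'
  set T : ℝ := max ε (|x| + 1) with hT
  have hT0 : 0 < T := lt_of_lt_of_le hε (le_max_left _ _)
  have hTx : |x| + 1 ≤ T := le_max_right _ _
  have hsplit : Ioc ε T ∪ Ioi T = Ioi ε := Ioc_union_Ioi_eq_Ioi (le_max_left _ _)
  rw [← hsplit]
  apply IntegrableOn.union
  · have : ContinuousOn f (Icc ε T) :=
      hfc.mono (fun t ht => lt_of_lt_of_le hε ht.1)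
    exact this.integrableOn_Icc.mono_set Ioc_subset_Icc_self
  · set C : ℝ := 2 * K * Real.sqrt (1 + |x|) with hC
    have hgint : IntegrableOn (fun t : ℝ => C * t ^ (-(3:ℝ)/2)) (Ioi T) volume :=
      (integrableOn_Ioi_rpow_of_lt (by norm_num) hT0).const_mul C
    apply Integrable.mono' hgint
    · exact (hfc.mono (fun t ht => hT0.trans (mem_Ioi.mp ht))).aestronglyMeasurable
        measurableSet_Ioi
    · filter_upwards [ae_restrict_mem measurableSet_Ioi] with t ht
      have htT : T < t := ht
      have ht1 : |x| + 1 ≤ t := by linarith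
      have hx0 : (0:ℝ) ≤ |x| := abs_nonneg x
      have ht0 : (0:ℝ) < t := by linarith
      have hxt1 : (1:ℝ) ≤ x + t := by
        have := neg_abs_le x; linarith
      have htx1 : (1:ℝ) ≤ t - x := by
        have := le_abs_self x; linarith
      have htT' : (0:ℝ) < t - |x| := by linarith
      have h1 : |besselJ p (x+t)| ≤ K / Real.sqrt (x+t) := hK _ hxt1
      have h2 : |besselJ p (x-t)| ≤ K / Real.sqrt (t-x) := by
        have he : x - t = -(t-x) := by ring
        rw [he, besselJ_neg, abs_mul]
        calc |Real.cos ((p:ℝ)*π)| * |besselJ p (t-x)| ≤ 1 * (K / Real.sqrt (t-x)) := by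
              apply mul_le_mul (Real.abs_cos_le_one _) (hK _ htx1) (abs_nonneg _) zero_le_one
          _ = K / Real.sqrt (t-x) := one_mul _
      have hs1 : Real.sqrt (t - |x|) ≤ Real.sqrt (x + t) :=
        Real.sqrt_le_sqrt (by linarith [neg_abs_le x])
      have hs2 : Real.sqrt (t - |x|) ≤ Real.sqrt (t - x) :=
        Real.sqrt_le_sqrt (by linarith [le_abs_self x])
      have hsp : 0 < Real.sqrt (t - |x|) := Real.sqrt_pos.2 htT'
      have hsxt : 0 < Real.sqrt (x + t) := Real.sqrt_pos.2 (by linarith)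
      have hstx : 0 < Real.sqrt (t - x) := Real.sqrt_pos.2 (by linarith)
      have h3 : K / Real.sqrt (x+t) ≤ K / Real.sqrt (t - |x|) := by gcongr
      have h4 : K / Real.sqrt (t-x) ≤ K / Real.sqrt (t - |x|) := by gcongr
      have h5 : ‖f t‖ ≤ (2*K/Real.sqrt (t - |x|))/t := by
        rw [Real.norm_eq_abs]
        have : |f t| = |besselJ p (x+t) - besselJ p (x-t)|/t := by
          rw [hf, abs_div, abs_of_pos ht0]
        rw [this]
        gcongr
        calc |besselJ p (x+t) - besselJ p (x-t)|
            ≤ |besselJ p (x+t)| + |besselJ p (x-t)| := abs_sub _ _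
          _ ≤ K / Real.sqrt (t - |x|) + K / Real.sqrt (t - |x|) := by
              apply add_le_add (h1.trans h3) (h2.trans h4)
          _ = 2*K/Real.sqrt (t - |x|) := by ring
      refine h5.trans ?_
      have hst0 : 0 < Real.sqrt t := Real.sqrt_pos.2 ht0
      have hrt : t ^ (-(3:ℝ)/2) = 1/(t * Real.sqrt t) := by
        rw [show (-(3:ℝ)/2) = -(1 + 1/2) by norm_num, Real.rpow_neg ht0.le,
          Real.rpow_add ht0, Real.rpow_one, Real.sqrt_eq_rpow]
        exact (one_div _).symm
      rw [hrt]
      have hkey : Real.sqrt t ≤ Real.sqrt (1+|x|) * Real.sqrt (t-|x|) := by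
        rw [← Real.sqrt_mul (by positivity)]
        apply Real.sqrt_le_sqrt
        nlinarith
      have hCpos : 0 ≤ Real.sqrt (1+|x|) := Real.sqrt_nonneg _
      rw [div_div, hC, mul_one_div, div_le_div_iff₀ (by positivity) (by positivity)]
      have expand : 2 * K * Real.sqrt (1+|x|) * (Real.sqrt (t-|x|) * t)
          = (2*K*t) * (Real.sqrt (1+|x|) * Real.sqrt (t-|x|)) := by ring
      rw [expand, show 2*K*(t*Real.sqrt t) = (2*K*t) * Real.sqrt t by ring]
      exact mul_le_mul_of_nonneg_left hkey (by positivity)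

end
noncomputable section

lemma inner_cov {ε R : ℝ} (hε : 0 < ε) (hR : 0 < R) {u : ℝ} (hu : 0 ≤ u) :
    ∫ t in ε..R, Real.sin (t*u)/t = Si (R*u) - Si (ε*u) := by
  rcases eq_or_lt_of_le hu with h0 | h0
  · simp [← h0, Si]
  · have hcongr : ∀ t ∈ uIcc ε R, Real.sin (t*u)/t = (fun v => Real.sin v / v) (t*u) * u := by
      intro t ht
      have ht0 : 0 < t := lt_of_lt_of_le (lt_min hε hR) (by
        rcases mem_uIcc.mp ht with h | h
        · exact le_trans (min_le_left _ _) h.1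
        · exact le_trans (min_le_right _ _) h.1)
      field_simp
    rw [intervalIntegral.integral_congr hcongr]
    have hcv := intervalIntegral.integral_comp_mul_right
      (fun v => Real.sin v / v) (a := ε) (b := R) h0.ne'
    have : ∫ t in ε..R, (fun v => Real.sin v / v) (t*u) * u
        = (∫ t in ε..R, (fun v => Real.sin v / v) (t*u)) * u :=
      intervalIntegral.integral_mul_const _ _
    rw [this, hcv]
    rw [smul_eq_mul, Si, Si, intervalIntegral.integral_interval_sub_left
      (sinc_intervalIntegrable _ _) (sinc_intervalIntegrable _ _)]
    field_simp

set_option maxHeartbeats 1000000 in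
lemma fubini_step (p : ℤ) (x : ℝ) {ε R : ℝ} (hε : 0 < ε) (hR : ε ≤ R) :
    ∫ t in ε..R, (besselJ p (x+t) - besselJ p (x-t))/t
      = (2/π) * ∫ s in (0:ℝ)..π, Real.sin ((p:ℝ)*s - x*Real.sin s)
          * (Si (R*Real.sin s) - Si (ε*Real.sin s)) := by
  have hR0 : 0 < R := lt_of_lt_of_le hε hR
  set g : ℝ → ℝ := fun s => Real.sin ((p:ℝ)*s - x*Real.sin s) with hg
  set φ : ℝ × ℝ → ℝ := fun q => (2/π) * (g q.2 * (Real.sin (q.1 * Real.sin q.2) / q.1))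
    with hφ
  have step1 : ∀ t ∈ uIcc ε R, (besselJ p (x+t) - besselJ p (x-t))/t
      = ∫ s in (0:ℝ)..π, φ (t, s) := by
    intro t ht
    have ht0 : 0 < t := lt_of_lt_of_le (lt_min hε hR0) (by
      rcases mem_uIcc.mp ht with h | h
      · exact le_trans (min_le_left _ _) h.1
      · exact le_trans (min_le_right _ _) h.1)
    rw [bessel_diff p x t]
    simp only [hφ]
    rw [intervalIntegral.integral_const_mul]
    rw [mul_div_assoc]
    congr 1
    rw [← intervalIntegral.integral_div]
    congr 1
    funext s
    rw [mul_div_assoc]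
  rw [intervalIntegral.integral_congr step1]
  have hmeq : ((volume.restrict (Ioc ε R)).prod (volume.restrict (Ioc (0:ℝ) π)))
      = (volume.prod volume).restrict ((Ioc ε R) ×ˢ (Ioc (0:ℝ) π)) :=
    Measure.prod_restrict _ _
  have hcontφ : ContinuousOn φ ((Ioc ε R) ×ˢ (Ioc (0:ℝ) π)) := by
    simp only [hφ, hg]
    apply ContinuousOn.mul continuousOn_const
    apply ContinuousOn.mul
    · exact (Real.continuous_sin.comp ((continuous_const.mul continuous_snd).sub
        (continuous_const.mul (Real.continuous_sin.comp continuous_snd)))).continuousOn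
    · apply ContinuousOn.div
      · exact (Real.continuous_sin.comp (continuous_fst.mul
          (Real.continuous_sin.comp continuous_snd))).continuousOn
      · exact continuousOn_fst
      · intro q hq
        exact (lt_of_lt_of_le hε hq.1.1.le).ne'
  have hprodint : Integrable φ
      ((volume.restrict (Ioc ε R)).prod (volume.restrict (Ioc (0:ℝ) π))) := by
    rw [hmeq]
    have hμfin : ((volume.prod volume).restrict ((Ioc ε R) ×ˢ (Ioc (0:ℝ) π))) univ < ⊤ := by
      rw [Measure.restrict_apply_univ, Measure.prod_prod]
      exact ENNReal.mul_lt_top measure_Ioc_lt_top measure_Ioc_lt_top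
    apply Integrable.mono' (g := fun _ => 2/π)
      (MeasureTheory.integrable_const_iff.mpr (Or.inr ⟨hμfin⟩))
    · exact hcontφ.aestronglyMeasurable (measurableSet_Ioc.prod measurableSet_Ioc)
    · filter_upwards [ae_restrict_mem (measurableSet_Ioc.prod measurableSet_Ioc)] with q hq
      obtain ⟨hq1, hq2⟩ := hq
      have ht0 : 0 < q.1 := lt_of_lt_of_le hε hq1.1.le
      rw [Real.norm_eq_abs]
      simp only [hφ]
      rw [abs_mul]
      have hsin : |Real.sin (q.1 * Real.sin q.2) / q.1| ≤ 1 := by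
        rw [abs_div, abs_of_pos ht0, div_le_one ht0]
        calc |Real.sin (q.1 * Real.sin q.2)| ≤ |q.1 * Real.sin q.2| := Real.abs_sin_le_abs
          _ = q.1 * |Real.sin q.2| := by rw [abs_mul, abs_of_pos ht0]
          _ ≤ q.1 * 1 := mul_le_mul_of_nonneg_left (Real.abs_sin_le_one _) ht0.le
          _ = q.1 := mul_one _
      rw [abs_of_pos (by positivity : (0:ℝ) < 2/π)]
      have h2 : |g q.2 * (Real.sin (q.1 * Real.sin q.2) / q.1)| ≤ 1 := by
        rw [abs_mul]
        calc |g q.2| * |Real.sin (q.1 * Real.sin q.2) / q.1|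
            ≤ 1 * 1 := by
              apply mul_le_mul _ hsin (abs_nonneg _) zero_le_one
              simp only [hg]
              exact Real.abs_sin_le_one _
          _ = 1 := by norm_num
      calc (2/π) * |g q.2 * (Real.sin (q.1 * Real.sin q.2) / q.1)|
          ≤ (2/π) * 1 := mul_le_mul_of_nonneg_left h2 (by positivity)
        _ = 2/π := mul_one _
  have hswap := MeasureTheory.integral_integral_swap
    (f := fun t s => φ (t, s))
    (μ := volume.restrict (Ioc ε R)) (ν := volume.restrict (Ioc (0:ℝ) π)) hprodint
  rw [intervalIntegral.integral_of_le hR]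
  have conv1 : ∫ t in Ioc ε R, ∫ s in (0:ℝ)..π, φ (t, s)
      = ∫ t in Ioc ε R, ∫ s in Ioc (0:ℝ) π, φ (t, s) := by
    apply MeasureTheory.integral_congr_ae
    filter_upwards with t
    rw [intervalIntegral.integral_of_le Real.pi_pos.le]
  rw [conv1, hswap]
  have step3 : ∫ s in Ioc (0:ℝ) π, ∫ t in Ioc ε R, φ (t, s)
      = ∫ s in Ioc (0:ℝ) π, (2/π) * (g s * (Si (R*Real.sin s) - Si (ε*Real.sin s))) := by
    apply MeasureTheory.integral_congr_ae
    filter_upwards [ae_restrict_mem measurableSet_Ioc] with s hs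
    have hsin0 : 0 ≤ Real.sin s := Real.sin_nonneg_of_nonneg_of_le_pi hs.1.le hs.2
    rw [← intervalIntegral.integral_of_le hR]
    have : ∀ t ∈ uIcc ε R, φ (t, s) = ((2/π) * g s) * (Real.sin (t * Real.sin s)/t) := by
      intro t _
      simp only [hφ]; ring
    rw [intervalIntegral.integral_congr this, intervalIntegral.integral_const_mul,
      inner_cov hε hR0 hsin0]
    ring
  rw [step3, MeasureTheory.integral_const_mul, intervalIntegral.integral_of_le Real.pi_pos.le]

end
noncomputable section

lemma Si_zero : Si 0 = 0 := intervalIntegral.integral_same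

lemma ae_Ioo (a b : ℝ) : ∀ᵐ s ∂(volume.restrict (Ioc a b)), s ∈ Ioo a b := by
  have h1 : ∀ᵐ s : ℝ ∂volume, s ≠ b := by
    have : (volume : Measure ℝ) {b} = 0 := Real.volume_singleton
    filter_upwards [measure_eq_zero_iff_ae_notMem.mp this] with s hs
    simpa using hs
  filter_upwards [ae_restrict_mem measurableSet_Ioc, ae_restrict_of_ae h1] with s hs hne
  exact ⟨hs.1, lt_of_le_of_ne hs.2 hne⟩

lemma restrict_Ioc_finite (a b : ℝ) :
    (volume.restrict (Ioc a b)) univ < ⊤ := by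
  rw [Measure.restrict_apply_univ]
  exact measure_Ioc_lt_top

set_option maxHeartbeats 1000000 in
lemma integral_Ioi_eq (p : ℤ) (x : ℝ) {ε : ℝ} (hε : 0 < ε) :
    ∫ t in Ioi ε, (besselJ p (x+t) - besselJ p (x-t))/t
      = (2/π) * ∫ s in Ioc (0:ℝ) π,
          Real.sin ((p:ℝ)*s - x*Real.sin s) * (π/2 - Si (ε*Real.sin s)) := by
  set g : ℝ → ℝ := fun s => Real.sin ((p:ℝ)*s - x*Real.sin s) with hg
  have L1 := MeasureTheory.intervalIntegral_tendsto_integral_Ioi ε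
    (f_integrableOn p x hε) tendsto_id
  have hg1 : ∀ s, |g s| ≤ 1 := fun s => Real.abs_sin_le_one _
  have L2pre : Tendsto (fun R => ∫ s in Ioc (0:ℝ) π, g s * (Si (R*Real.sin s) - Si (ε*Real.sin s)))
      atTop (𝓝 (∫ s in Ioc (0:ℝ) π, g s * (π/2 - Si (ε*Real.sin s)))) := by
    apply MeasureTheory.tendsto_integral_filter_of_dominated_convergence (bound := fun _ => 8)
    · filter_upwards with R
      apply Continuous.aestronglyMeasurable
      apply Continuous.mul
      · simp only [hg]; fun_prop
      · apply Continuous.sub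
        · exact Si_continuous.comp (continuous_const.mul Real.continuous_sin)
        · exact Si_continuous.comp (continuous_const.mul Real.continuous_sin)
    · filter_upwards [eventually_ge_atTop (0:ℝ)] with R hR0
      filter_upwards [ae_restrict_mem measurableSet_Ioc] with s hs
      have hsin0 : 0 ≤ Real.sin s := Real.sin_nonneg_of_nonneg_of_le_pi hs.1.le hs.2
      rw [Real.norm_eq_abs, abs_mul]
      calc |g s| * |Si (R*Real.sin s) - Si (ε*Real.sin s)|
          ≤ 1 * (|Si (R*Real.sin s)| + |Si (ε*Real.sin s)|) :=
            mul_le_mul (hg1 s) (abs_sub _ _) (abs_nonneg _) zero_le_one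
        _ ≤ 1 * (4 + 4) := by
            apply mul_le_mul_of_nonneg_left _ zero_le_one
            exact add_le_add (Si_bound (by positivity)) (Si_bound (by positivity))
        _ = 8 := by norm_num
    · exact MeasureTheory.integrable_const_iff.mpr (Or.inr ⟨restrict_Ioc_finite 0 π⟩)
    · filter_upwards [ae_Ioo 0 π] with s hs
      have hsin : 0 < Real.sin s := Real.sin_pos_of_pos_of_lt_pi hs.1 hs.2
      have h1 : Tendsto (fun R : ℝ => R * Real.sin s) atTop atTop :=
        Tendsto.atTop_mul_const hsin tendsto_id
      exact ((Si_tendsto.comp h1).sub_const _).const_mul (g s)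
  have L2 : Tendsto (fun R => ∫ t in ε..R, (besselJ p (x+t) - besselJ p (x-t))/t) atTop
      (𝓝 ((2/π) * ∫ s in Ioc (0:ℝ) π, g s * (π/2 - Si (ε*Real.sin s)))) := by
    apply Tendsto.congr' _ (L2pre.const_mul (2/π))
    filter_upwards [eventually_ge_atTop ε] with R hR
    rw [fubini_step p x hε hR, intervalIntegral.integral_of_le Real.pi_pos.le]
  exact tendsto_nhds_unique L1 L2

set_option maxHeartbeats 1000000 in
lemma final_limit (p : ℤ) (x : ℝ) :
    Tendsto (fun ε : ℝ => ∫ s in Ioc (0:ℝ) π,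
        Real.sin ((p:ℝ)*s - x*Real.sin s) * (π/2 - Si (ε*Real.sin s)))
      (nhdsWithin 0 (Ioi 0))
      (𝓝 (∫ s in Ioc (0:ℝ) π, Real.sin ((p:ℝ)*s - x*Real.sin s) * (π/2))) := by
  apply MeasureTheory.tendsto_integral_filter_of_dominated_convergence (bound := fun _ => 6)
  · filter_upwards with ε
    apply Continuous.aestronglyMeasurable
    apply Continuous.mul (by fun_prop)
    exact (continuous_const.sub (Si_continuous.comp (continuous_const.mul Real.continuous_sin)))
  · filter_upwards [self_mem_nhdsWithin] with ε hε
    filter_upwards [ae_restrict_mem measurableSet_Ioc] with s hs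
    have hε0 : (0:ℝ) < ε := hε
    have hsin0 : 0 ≤ Real.sin s := Real.sin_nonneg_of_nonneg_of_le_pi hs.1.le hs.2
    rw [Real.norm_eq_abs, abs_mul]
    calc |Real.sin ((p:ℝ)*s - x*Real.sin s)| * |π/2 - Si (ε*Real.sin s)|
        ≤ 1 * (|π/2| + |Si (ε*Real.sin s)|) :=
          mul_le_mul (Real.abs_sin_le_one _) (abs_sub _ _) (abs_nonneg _) zero_le_one
      _ ≤ 1 * (2 + 4) := by
          apply mul_le_mul_of_nonneg_left _ zero_le_one
          apply add_le_add _ (Si_bound (by positivity))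
          rw [abs_of_nonneg (by positivity : (0:ℝ) ≤ π/2)]
          linarith [Real.pi_le_four]
      _ = 6 := by norm_num
  · exact MeasureTheory.integrable_const_iff.mpr (Or.inr ⟨restrict_Ioc_finite 0 π⟩)
  · filter_upwards [ae_restrict_mem measurableSet_Ioc] with s hs
    have hlin : Tendsto (fun ε : ℝ => ε * Real.sin s) (nhdsWithin 0 (Ioi 0)) (𝓝 0) := by
      have := ((continuous_id.mul (continuous_const (y := Real.sin s))).tendsto 0).mono_left
        (nhdsWithin_le_nhds (s := Ioi (0:ℝ)))
      simpa [Pi.mul_def] using this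
    have hSi : Tendsto (fun ε : ℝ => Si (ε * Real.sin s)) (nhdsWithin 0 (Ioi 0)) (𝓝 0) := by
      have := (Si_continuous.tendsto 0).comp hlin
      rwa [Si_zero] at this
    have := (tendsto_const_nhds (x := π/2) (f := nhdsWithin (0:ℝ) (Ioi 0))).sub hSi
    rw [sub_zero] at this
    exact this.const_mul _

end
noncomputable section

/-- The Hilbert transform of the Bessel function `J_p`, defined as the principal value
`H(J_p)(x) = -(1/π) lim_{ε→0⁺} ∫_ε^∞ (J_p(x+t) - J_p(x-t))/t dt`, admits the
representation `(1/π) ∫₀^π sin(x sin t - pt) dt`; in particular at `x = 0` it equals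
`(1/π)∫₀^π sin(-pt) dt = -(1-cos(πp))/(πp)` for `p ≠ 0`, which vanishes for even `p`. -/
theorem hilbert_transform_besselJ (p : ℤ) (x : ℝ) :
    Tendsto
        (fun ε : ℝ =>
          -(1 / π) * ∫ t in Set.Ioi ε, (besselJ p (x + t) - besselJ p (x - t)) / t)
        (nhdsWithin 0 (Set.Ioi 0))
        (nhds ((1 / π) * ∫ t in (0 : ℝ)..π, Real.sin (x * Real.sin t - p * t))) ∧
      (p ≠ 0 →
        (1 / π) * (∫ t in (0 : ℝ)..π, Real.sin (-(p * t))) =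
          -((1 - Real.cos (π * p)) / (π * p))) ∧
      (p ≠ 0 → Even p →
        (1 / π) * (∫ t in (0 : ℝ)..π, Real.sin (-(p * t))) = 0) := by
  have hπ : (π:ℝ) ≠ 0 := Real.pi_ne_zero
  have part2 : p ≠ 0 →
      (1 / π) * (∫ t in (0 : ℝ)..π, Real.sin (-(p * t))) =
        -((1 - Real.cos (π * p)) / (π * p)) := by
    intro hp
    have hp0 : ((p:ℝ)) ≠ 0 := Int.cast_ne_zero.mpr hp
    have e1 : (∫ t in (0 : ℝ)..π, Real.sin (-((p:ℝ) * t)))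
        = - ∫ t in (0 : ℝ)..π, Real.sin ((p:ℝ) * t) := by
      rw [← intervalIntegral.integral_neg]
      apply intervalIntegral.integral_congr
      intro t _
      exact Real.sin_neg _
    have e2 : (∫ t in (0 : ℝ)..π, Real.sin ((p:ℝ) * t))
        = (p:ℝ)⁻¹ • ∫ t in ((p:ℝ)*0)..((p:ℝ)*π), Real.sin t :=
      intervalIntegral.integral_comp_mul_left Real.sin hp0
    rw [e1, e2, integral_sin, mul_zero, Real.cos_zero, smul_eq_mul]
    rw [show Real.cos (π * (p:ℝ)) = Real.cos ((p:ℝ)*π) by rw [mul_comm]]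
    field_simp
  refine ⟨?_, part2, ?_⟩
  · -- main limit
    have h2 : Tendsto (fun ε : ℝ =>
        -(1 / π) * ∫ t in Set.Ioi ε, (besselJ p (x + t) - besselJ p (x - t)) / t)
        (nhdsWithin 0 (Set.Ioi 0))
        (𝓝 (-(1/π) * (2/π) * ∫ s in Ioc (0:ℝ) π,
          Real.sin ((p:ℝ)*s - x*Real.sin s) * (π/2))) := by
      apply Tendsto.congr' _ ((final_limit p x).const_mul (-(1/π) * (2/π)))
      filter_upwards [self_mem_nhdsWithin] with ε hε
      rw [integral_Ioi_eq p x hε]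
      ring
    have hval : -(1/π) * (2/π) * ∫ s in Ioc (0:ℝ) π,
        Real.sin ((p:ℝ)*s - x*Real.sin s) * (π/2)
        = (1/π) * ∫ t in (0:ℝ)..π, Real.sin (x * Real.sin t - (p:ℝ) * t) := by
      have e1 : ∫ t in (0:ℝ)..π, Real.sin (x * Real.sin t - (p:ℝ) * t)
          = - ∫ s in (0:ℝ)..π, Real.sin ((p:ℝ)*s - x*Real.sin s) := by
        rw [← intervalIntegral.integral_neg]
        apply intervalIntegral.integral_congr
        intro t _
        show Real.sin (x * Real.sin t - (p:ℝ)*t) = -Real.sin ((p:ℝ)*t - x*Real.sin t)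
        rw [show x * Real.sin t - (p:ℝ)*t = -((p:ℝ)*t - x*Real.sin t) by ring, Real.sin_neg]
      have e2 : ∫ s in Ioc (0:ℝ) π, Real.sin ((p:ℝ)*s - x*Real.sin s) * (π/2)
          = (∫ s in (0:ℝ)..π, Real.sin ((p:ℝ)*s - x*Real.sin s)) * (π/2) := by
        rw [MeasureTheory.integral_mul_const, intervalIntegral.integral_of_le Real.pi_pos.le]
      rw [e1, e2]
      field_simp
    rw [← hval]
    exact h2
  · intro hp hev
    rw [part2 hp]
    obtain ⟨k, hk⟩ := hev
    have : Real.cos (π * (p:ℝ)) = 1 := by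
      rw [show π * (p:ℝ) = (k:ℝ) * (2 * π) by rw [hk]; push_cast; ring]
      exact_mod_cast Real.cos_int_mul_two_pi k
    rw [this]
    simp

end
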